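/- Let ζ be a primitive root of unity with ζ² of order ℓ̄ > 1, and let ξ̄ = ζ^{binom(ℓ̄,2)} (a fourth root of unity). Then the quantum factorial satisfies [ℓ̄ − 1]_ζ! = ℓ̄ · ξ̄⁻¹ · (ζ⁻¹ − ζ)^{−ℓ̄+1}; equivalently, (ζ⁻¹ − ζ)^{ℓ̄−1} · [ℓ̄ − 1]_ζ! = ℓ̄ · ξ̄⁻¹ in ℂ. -/

import Mathlib

/-- The balanced quantum integer `[m]_ζ = (ζ^m − ζ^{−m})/(ζ − ζ⁻¹)` in `ℂ`. -/
noncomputable def qIntC (ζ : ℂ) (m : ℕ) : ℂ :=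
  (ζ ^ (m : ℤ) - ζ ^ (-(m : ℤ))) / (ζ - ζ⁻¹)

/-- The quantum factorial `[m]_ζ! = Π_{j=1}^m [j]_ζ`. -/
noncomputable def qFactC (ζ : ℂ) (m : ℕ) : ℂ :=
  ∏ j ∈ Finset.range m, qIntC ζ (j + 1)

/-- With `ξ̄ = ζ^{binom(ℓ̄,2)}`, one has `(ζ⁻¹ − ζ)^{ℓ̄−1} · [ℓ̄−1]_ζ! = ℓ̄ · ξ̄⁻¹`,
equivalently `[ℓ̄−1]_ζ! = ℓ̄ · ξ̄⁻¹ · (ζ⁻¹ − ζ)^{−ℓ̄+1}`. -/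
theorem stmt16 (ζ : ℂ) (l : ℕ) (hl : 1 < l) (hζ : IsPrimitiveRoot (ζ ^ 2) l) :
    (ζ⁻¹ - ζ) ^ (l - 1) * qFactC ζ (l - 1) = (l : ℂ) * (ζ ^ Nat.choose l 2)⁻¹ := by
  obtain ⟨n, rfl⟩ : ∃ n, l = n + 1 := ⟨l - 1, by omega⟩
  have hζ0 : ζ ≠ 0 := by
    have := hζ.ne_zero (by omega)
    exact fun h => this (by simp [h])
  have hζ2 : ζ ^ 2 ≠ 1 := by
    intro h
    have := hζ.pow_eq_one_iff_dvd 1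
    simp [h] at this
    omega
  have hsub : ζ - ζ⁻¹ ≠ 0 := by
    intro h
    apply hζ2
    have : ζ = ζ⁻¹ := by linear_combination h
    field_simp [sq] at this ⊢
    exact this
  have hterm : ∀ k : ℕ, (ζ⁻¹ - ζ) * qIntC ζ (k + 1)
      = (ζ ^ (k + 1))⁻¹ * (1 - (ζ ^ 2) ^ (k + 1)) := by
    intro k
    unfold qIntC
    simp only [zpow_neg, zpow_natCast]
    have hne : (ζ ⁻¹ - ζ) = -(ζ - ζ⁻¹) := by ring
    rw [hne, neg_mul, mul_div_cancel₀ _ hsub]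
    have ha2 : (ζ ^ 2) ^ (k + 1) = ζ ^ (k + 1) * ζ ^ (k + 1) := by
      rw [← pow_mul, two_mul, pow_add]
    rw [ha2]
    have hm : ζ ^ (k + 1) ≠ 0 := pow_ne_zero _ hζ0
    field_simp
    ring
  have key : ∏ k ∈ Finset.range n, (1 - (ζ ^ 2) ^ (k + 1)) = (n : ℂ) + 1 :=
    hζ.prod_one_sub_pow_eq_order
  have hsum : ∑ k ∈ Finset.range n, (k + 1) = (n + 1).choose 2 := by
    have h1 := Finset.sum_range_succ' (fun i => i) n
    have h2 := Finset.sum_range_id_mul_two (n + 1)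
    rw [Nat.choose_two_right]
    omega
  calc (ζ⁻¹ - ζ) ^ n * qFactC ζ n
      = ∏ k ∈ Finset.range n, ((ζ⁻¹ - ζ) * qIntC ζ (k + 1)) := by
        rw [Finset.prod_mul_distrib, Finset.prod_const, Finset.card_range]; rfl
    _ = ∏ k ∈ Finset.range n, ((ζ ^ (k + 1))⁻¹ * (1 - (ζ ^ 2) ^ (k + 1))) := by
        exact Finset.prod_congr rfl fun k _ => hterm k
    _ = (∏ k ∈ Finset.range n, (ζ ^ (k + 1))⁻¹) * ((n : ℂ) + 1) := by
        rw [Finset.prod_mul_distrib, key]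
    _ = ((n : ℂ) + 1) * (ζ ^ ((n + 1).choose 2))⁻¹ := by
        rw [Finset.prod_inv_distrib, Finset.prod_pow_eq_pow_sum, hsum, mul_comm]
    _ = ((n + 1 : ℕ) : ℂ) * (ζ ^ ((n + 1).choose 2))⁻¹ := by push_cast; ring
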